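/- For every 2 × 2 matrix with nonnegative real entries a, b (first row) and c, d (second row), the scaling mean equals (√(ad) + √(bc))/2. -/

import Mathlib

open scoped BigOperators Kronecker
open Matrix

/-- The permanent of a square real matrix. -/
noncomputable def perm {ι : Type*} [Fintype ι] [DecidableEq ι] (A : Matrix ι ι ℝ) : ℝ :=
  ∑ σ : Equiv.Perm ι, ∏ i, A i (σ i)

/-- The permanental mean `pm A = (per A / n!) ^ (1/n)`. -/
noncomputable def pm {ι : Type*} [Fintype ι] [DecidableEq ι] (A : Matrix ι ι ℝ) : ℝ :=
  (perm A / (Nat.factorial (Fintype.card ι) : ℝ)) ^ ((Fintype.card ι : ℝ)⁻¹)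

/-- The geometric mean of the entries of a vector. -/
noncomputable def gmVec {ι : Type*} [Fintype ι] (v : ι → ℝ) : ℝ :=
  (∏ i, v i) ^ ((Fintype.card ι : ℝ)⁻¹)

/-- The set of values whose infimum defines the scaling mean. -/
noncomputable def smSet {ι κ : Type*} [Fintype ι] [Fintype κ] (A : Matrix ι κ ℝ) : Set ℝ :=
  {r : ℝ | ∃ x : ι → ℝ, ∃ y : κ → ℝ, (∀ i, 0 < x i) ∧ (∀ j, 0 < y j) ∧
    r = (∑ i, ∑ j, x i * A i j * y j) / (gmVec x * gmVec y)}

/-- The scaling mean `sm A = (1/(mn)) · inf over positive vectors x, y of xᵀAy/(gm x · gm y)`. -/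
noncomputable def sm {ι κ : Type*} [Fintype ι] [Fintype κ] (A : Matrix ι κ ℝ) : ℝ :=
  ((Fintype.card ι : ℝ) * (Fintype.card κ : ℝ))⁻¹ * sInf (smSet A)

lemma amgm_aux (u v : ℝ) (hu : 0 ≤ u) (hv : 0 ≤ v) :
    2 * Real.sqrt (u * v) ≤ u + v := by
  nlinarith [sq_nonneg (Real.sqrt u - Real.sqrt v), Real.sq_sqrt hu, Real.sq_sqrt hv,
    Real.sqrt_mul hu v, Real.sqrt_nonneg u, Real.sqrt_nonneg v]

lemma approx_aux (a d : ℝ) (ha : 0 ≤ a) (hd : 0 ≤ d) {ε : ℝ} (hε : 0 < ε) :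
    ∃ p : ℝ, 0 < p ∧ a * p + d / p ≤ 2 * Real.sqrt (a * d) + ε := by
  have hsa : 0 ≤ Real.sqrt a := Real.sqrt_nonneg a
  have hsd : 0 ≤ Real.sqrt d := Real.sqrt_nonneg d
  have ha2 : Real.sqrt a ^ 2 = a := Real.sq_sqrt ha
  have hd2 : Real.sqrt d ^ 2 = d := Real.sq_sqrt hd
  set sa := Real.sqrt a
  set sd := Real.sqrt d
  have hads : Real.sqrt (a * d) = sa * sd := Real.sqrt_mul ha d
  set δ := ε / (sa + sd + 1) with hδdef
  have hδ : 0 < δ := by positivity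
  have hposa : 0 < sa + δ := by linarith
  have hposd : 0 < sd + δ := by linarith
  refine ⟨(sd + δ) / (sa + δ), by positivity, ?_⟩
  have h1 : a * ((sd + δ) / (sa + δ)) ≤ sa * (sd + δ) := by
    rw [← mul_div_assoc, div_le_iff₀ hposa]
    nlinarith [mul_nonneg (mul_nonneg hsa hposd.le) hδ.le]
  have h2 : d / ((sd + δ) / (sa + δ)) ≤ sd * (sa + δ) := by
    rw [div_div_eq_mul_div, div_le_iff₀ hposd]
    nlinarith [mul_nonneg (mul_nonneg hsd hposa.le) hδ.le]
  have h3 : (sa + sd) * δ ≤ ε := by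
    have : (sa + sd) * δ ≤ (sa + sd + 1) * δ := by nlinarith
    have h4 : (sa + sd + 1) * δ = ε := by
      rw [hδdef]
      field_simp
    linarith
  nlinarith

theorem sInf_sm_eq (a b c d : ℝ) (ha : 0 ≤ a) (hb : 0 ≤ b) (hc : 0 ≤ c) (hd : 0 ≤ d) :
    sInf (smSet !![a, b; c, d]) = 2 * (Real.sqrt (a * d) + Real.sqrt (b * c)) := by
  set A := !![a, b; c, d] with hA
  set M := 2 * (Real.sqrt (a * d) + Real.sqrt (b * c)) with hM
  have hlb : ∀ r ∈ smSet A, M ≤ r := by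
    rintro r ⟨x, y, hx, hy, rfl⟩
    have hx0 := hx 0; have hx1 := hx 1; have hy0 := hy 0; have hy1 := hy 1
    have hX : (0:ℝ) < x 0 * x 1 * (y 0 * y 1) := by positivity
    have hsum : ∑ i, ∑ j, x i * A i j * y j =
        x 0 * a * y 0 + x 0 * b * y 1 + (x 1 * c * y 0 + x 1 * d * y 1) := by
      rw [Fin.sum_univ_two, Fin.sum_univ_two, Fin.sum_univ_two]
      simp [hA]
    have hgm : gmVec x * gmVec y = Real.sqrt (x 0 * x 1 * (y 0 * y 1)) := by
      rw [gmVec, gmVec, Fintype.card_fin, Fin.prod_univ_two, Fin.prod_univ_two,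
        show ((2:ℕ):ℝ)⁻¹ = (1/2 : ℝ) by norm_num, ← Real.sqrt_eq_rpow, ← Real.sqrt_eq_rpow,
        ← Real.sqrt_mul (by positivity)]
    rw [hsum, hgm, le_div_iff₀ (Real.sqrt_pos.2 hX)]
    set X := x 0 * x 1 * (y 0 * y 1) with hXdef
    have e1 : (x 0 * a * y 0) * (x 1 * d * y 1) = (a * d) * X := by rw [hXdef]; ring
    have e2 : (x 0 * b * y 1) * (x 1 * c * y 0) = (b * c) * X := by rw [hXdef]; ring
    have h1 := amgm_aux (x 0 * a * y 0) (x 1 * d * y 1) (by positivity) (by positivity)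
    have h2 := amgm_aux (x 0 * b * y 1) (x 1 * c * y 0) (by positivity) (by positivity)
    rw [e1, Real.sqrt_mul (by positivity)] at h1
    rw [e2, Real.sqrt_mul (by positivity)] at h2
    have hMX : M * Real.sqrt X =
        2 * (Real.sqrt (a * d) * Real.sqrt X) + 2 * (Real.sqrt (b * c) * Real.sqrt X) := by
      rw [hM]; ring
    linarith
  have hub : ∀ ε : ℝ, 0 < ε → ∃ r ∈ smSet A, r ≤ M + ε := by
    intro ε hε
    obtain ⟨p, hp, hpb⟩ := approx_aux a d ha hd (half_pos hε)
    obtain ⟨q, hq, hqb⟩ := approx_aux b c hb hc (half_pos hε)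
    have hsp : 0 < Real.sqrt p := Real.sqrt_pos.2 hp
    have hsq : 0 < Real.sqrt q := Real.sqrt_pos.2 hq
    have hp2 : Real.sqrt p ^ 2 = p := Real.sq_sqrt hp.le
    have hq2 : Real.sqrt q ^ 2 = q := Real.sq_sqrt hq.le
    set sp := Real.sqrt p
    set sq := Real.sqrt q
    refine ⟨_, ⟨![sp * sq, (sp * sq)⁻¹], ![sp / sq, sq / sp], ?_, ?_, rfl⟩, ?_⟩
    · intro i; fin_cases i <;> simp <;> positivity
    · intro j; fin_cases j <;> simp <;> positivity
    · have hgx : gmVec ![sp * sq, (sp * sq)⁻¹] = 1 := by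
        rw [gmVec, Fintype.card_fin, Fin.prod_univ_two]
        have h : (![sp * sq, (sp * sq)⁻¹] : Fin 2 → ℝ) 0 *
            (![sp * sq, (sp * sq)⁻¹] : Fin 2 → ℝ) 1 = 1 := by
          simp only [Matrix.cons_val_zero, Matrix.cons_val_one, Matrix.head_cons]
          field_simp
        rw [h, Real.one_rpow]
      have hgy : gmVec ![sp / sq, sq / sp] = 1 := by
        rw [gmVec, Fintype.card_fin, Fin.prod_univ_two]
        have h : (![sp / sq, sq / sp] : Fin 2 → ℝ) 0 *
            (![sp / sq, sq / sp] : Fin 2 → ℝ) 1 = 1 := by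
          simp only [Matrix.cons_val_zero, Matrix.cons_val_one, Matrix.head_cons]
          field_simp
        rw [h, Real.one_rpow]
      have hsum : (∑ i, ∑ j, (![sp * sq, (sp * sq)⁻¹]) i * A i j * (![sp / sq, sq / sp]) j)
          = a * p + b * q + (c / q + d / p) := by
        rw [Fin.sum_univ_two, Fin.sum_univ_two, Fin.sum_univ_two]
        simp only [hA, Matrix.cons_val_zero, Matrix.cons_val_one, Matrix.head_cons,
          Matrix.of_apply, Matrix.cons_val', Matrix.head_fin_const]
        rw [← hp2, ← hq2]
        field_simp
      rw [hsum, hgx, hgy, mul_one, div_one]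
      rw [hM]
      linarith
  have hne : (smSet A).Nonempty := by
    obtain ⟨r, hr, _⟩ := hub 1 one_pos
    exact ⟨r, hr⟩
  have hbdd : BddBelow (smSet A) := ⟨M, fun r hr => hlb r hr⟩
  apply le_antisymm
  · apply le_of_forall_pos_le_add
    intro ε hε
    obtain ⟨r, hr, hle⟩ := hub ε hε
    exact (csInf_le hbdd hr).trans hle
  · exact le_csInf hne hlb

/-- The scaling mean of a nonnegative `2 × 2` matrix `[[a,b],[c,d]]`
equals `(√(ad) + √(bc))/2`. -/
theorem stmt_10 (a b c d : ℝ) (ha : 0 ≤ a) (hb : 0 ≤ b) (hc : 0 ≤ c) (hd : 0 ≤ d) :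
    sm !![a, b; c, d] = (Real.sqrt (a * d) + Real.sqrt (b * c)) / 2 := by
  rw [sm, sInf_sm_eq a b c d ha hb hc hd, Fintype.card_fin]
  push_cast
  ring
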